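/- Fix integers q ≥ 2, r ≥ 2 and β > 0, and suppose g_k^r(z) < z_k for every z ∈ P and every k with z_k ∈ (1/q, 1] (which holds whenever β < β_s(q,r)). Then for every z ∈ P with z ≠ z_β, the straight-line path z(t) = (1−t)z_β + t z, t ∈ [0,1], satisfies Σ_{k=1}^q ∫₀¹ |d/dt [g_k^r(z(t))]| dt < ‖z − z_β‖₁; i.e. the aggregate g-variation along the straight line from z_β to z is strictly less than ‖z − z_β‖₁. -/

import Mathlib

noncomputable section

/-- The probability simplex in `ℝ^q`. -/
def simplexP (q : ℕ) : Set (Fin q → ℝ) :=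
  {ν | (∀ k, 0 ≤ ν k) ∧ ∑ k, ν k = 1}

/-- `g_k^r(z) = e^{β z_k^{r−1}} / Σ_j e^{β z_j^{r−1}}` for the generalized
Curie–Weiss–Potts model. -/
def gGCWP (q r : ℕ) (β : ℝ) (z : Fin q → ℝ) (k : Fin q) : ℝ :=
  Real.exp (β * z k ^ (r - 1)) / ∑ j : Fin q, Real.exp (β * z j ^ (r - 1))

/-- The ℓ¹ norm on `ℝ^q`. -/
def l1 (q : ℕ) (x : Fin q → ℝ) : ℝ := ∑ k, |x k|

/-- The equidistributed (single-phase equilibrium) point `z_β = (1/q,…,1/q)`. -/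
def zUnif (q : ℕ) : Fin q → ℝ := fun _ => 1 / (q : ℝ)

namespace GCWP

variable (q r : ℕ) (β : ℝ) (z : Fin q → ℝ)

noncomputable def aa (j : Fin q) : ℝ := z j - 1/(q:ℝ)
noncomputable def Xp (j : Fin q) (t : ℝ) : ℝ := 1/(q:ℝ) + t * aa q z j
noncomputable def Np (j : Fin q) (t : ℝ) : ℝ := Real.exp (β * (Xp q z j t)^(r-1))
noncomputable def Zp (t : ℝ) : ℝ := ∑ j, Np q r β z j t
noncomputable def hp (k : Fin q) (t : ℝ) : ℝ := Np q r β z k t / Zp q r β z t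
noncomputable def wp (j : Fin q) (t : ℝ) : ℝ := (Xp q z j t)^(r-2) * aa q z j
noncomputable def wb (t : ℝ) : ℝ := ∑ j, hp q r β z j t * wp q r z j t
noncomputable def Hdp (k : Fin q) (t : ℝ) : ℝ :=
  β * ((r-1:ℕ):ℝ) * hp q r β z k t * (wp q r z k t - wb q r β z t)
noncomputable def wp' (j : Fin q) (t : ℝ) : ℝ :=
  ((r-2:ℕ):ℝ) * (Xp q z j t)^(r-3) * (aa q z j)^2
noncomputable def Dk (k : Fin q) (t : ℝ) : ℝ := wb q r β z t - wp q r z k t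
noncomputable def Dk' (k : Fin q) (t : ℝ) : ℝ :=
  (∑ j, (Hdp q r β z j t * wp q r z j t + hp q r β z j t * wp' q r z j t)) - wp' q r z k t

variable {q r β z}

lemma Xp_hasDeriv (j : Fin q) (t : ℝ) : HasDerivAt (Xp q z j) (aa q z j) t := by
  have h : HasDerivAt (fun x : ℝ => 1/(q:ℝ) + x * aa q z j) (aa q z j) t := by
    simpa using ((hasDerivAt_id t).mul_const (aa q z j)).const_add (1/(q:ℝ))
  exact h

lemma Xp_cont (j : Fin q) : Continuous (Xp q z j) :=
  continuous_iff_continuousAt.2 fun t => (Xp_hasDeriv j t).continuousAt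

lemma Np_hasDeriv (hr : 2 ≤ r) (j : Fin q) (t : ℝ) :
    HasDerivAt (Np q r β z j) (β * ((r-1:ℕ):ℝ) * wp q r z j t * Np q r β z j t) t := by
  have h1 : HasDerivAt (fun t => β * (Xp q z j t)^(r-1))
      (β * (((r-1:ℕ):ℝ) * (Xp q z j t)^(r-1-1) * aa q z j)) t :=
    (((Xp_hasDeriv j t).pow (r-1)).const_mul β)
  have h2 := h1.exp
  have hee : r - 1 - 1 = r - 2 := by omega
  rw [hee] at h2
  have : Real.exp (β * Xp q z j t ^ (r - 1)) * (β * (((r-1:ℕ):ℝ) * (Xp q z j t)^(r-2) * aa q z j))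
      = β * ((r-1:ℕ):ℝ) * wp q r z j t * Np q r β z j t := by
    rw [wp, Np]; ring
  rw [this] at h2
  exact h2

lemma Np_pos (j : Fin q) (t : ℝ) : 0 < Np q r β z j t := Real.exp_pos _

lemma Zp_pos (hq : 2 ≤ q) (t : ℝ) : 0 < Zp q r β z t := by
  have : Nonempty (Fin q) := ⟨⟨0, by omega⟩⟩
  exact Finset.sum_pos (fun j _ => Np_pos j t) Finset.univ_nonempty

lemma Zp_hasDeriv (hr : 2 ≤ r) (t : ℝ) :
    HasDerivAt (Zp q r β z) (∑ j, β * ((r-1:ℕ):ℝ) * wp q r z j t * Np q r β z j t) t := by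
  exact HasDerivAt.fun_sum (fun j _ => Np_hasDeriv hr j t)

lemma hp_hasDeriv (hq : 2 ≤ q) (hr : 2 ≤ r) (k : Fin q) (t : ℝ) :
    HasDerivAt (hp q r β z k) (Hdp q r β z k t) t := by
  have hZ := Zp_pos (β := β) (r := r) (z := z) hq t
  have h := (Np_hasDeriv (β := β) (z := z) hr k t).div (Zp_hasDeriv (β := β) (z := z) hr t) hZ.ne'
  have heq : (β * ((r-1:ℕ):ℝ) * wp q r z k t * Np q r β z k t * Zp q r β z t -
      Np q r β z k t * ∑ j, β * ((r-1:ℕ):ℝ) * wp q r z j t * Np q r β z j t) / (Zp q r β z t)^2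
      = Hdp q r β z k t := by
    rw [Hdp, hp, wb]
    have hsum1 : ∑ j, β * ((r-1:ℕ):ℝ) * wp q r z j t * Np q r β z j t
        = β * ((r-1:ℕ):ℝ) * ∑ j, wp q r z j t * Np q r β z j t := by
      rw [Finset.mul_sum]; exact Finset.sum_congr rfl fun j _ => by ring
    have hsum2 : ∑ j, hp q r β z j t * wp q r z j t
        = (∑ j, wp q r z j t * Np q r β z j t) / Zp q r β z t := by
      rw [Finset.sum_div]
      exact Finset.sum_congr rfl fun j _ => by rw [hp]; ring
    rw [hsum1, hsum2]
    field_simp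
  rw [heq] at h
  exact h

lemma hp_pos (hq : 2 ≤ q) (k : Fin q) (t : ℝ) : 0 < hp q r β z k t :=
  div_pos (Np_pos k t) (Zp_pos hq t)

lemma hp_sum (hq : 2 ≤ q) (t : ℝ) : ∑ k, hp q r β z k t = 1 := by
  simp only [hp]
  rw [← Finset.sum_div, ← Zp]
  exact div_self (Zp_pos (β := β) (r := r) (z := z) hq t).ne'

lemma hp_cont (hq : 2 ≤ q) (hr : 2 ≤ r) (k : Fin q) : Continuous (hp q r β z k) :=
  continuous_iff_continuousAt.2 fun t => (hp_hasDeriv hq hr k t).continuousAt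

lemma wp_hasDeriv (j : Fin q) (t : ℝ) :
    HasDerivAt (wp q r z j) (wp' q r z j t) t := by
  have h1 := ((Xp_hasDeriv (z := z) j t).pow (r-2)).mul_const (aa q z j)
  have hee : r - 2 - 1 = r - 3 := by omega
  rw [hee] at h1
  have : ((r-2:ℕ):ℝ) * Xp q z j t ^ (r-3) * aa q z j * aa q z j = wp' q r z j t := by
    rw [wp']; ring
  rw [this] at h1
  exact h1

lemma wp_cont (j : Fin q) : Continuous (wp q r z j) :=
  continuous_iff_continuousAt.2 fun t => (wp_hasDeriv j t).continuousAt

lemma wb_cont (hq : 2 ≤ q) (hr : 2 ≤ r) : Continuous (wb q r β z) :=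
  continuous_finset_sum _ fun j _ => (hp_cont hq hr j).mul (wp_cont j)

lemma Hdp_cont (hq : 2 ≤ q) (hr : 2 ≤ r) (k : Fin q) : Continuous (Hdp q r β z k) :=
  ((continuous_const.mul (hp_cont hq hr k)).mul ((wp_cont k).sub (wb_cont hq hr)))

lemma Dk_hasDeriv (hq : 2 ≤ q) (hr : 2 ≤ r) (k : Fin q) (t : ℝ) :
    HasDerivAt (Dk q r β z k) (Dk' q r β z k t) t := by
  have h1 : HasDerivAt (wb q r β z)
      (∑ j, (Hdp q r β z j t * wp q r z j t + hp q r β z j t * wp' q r z j t)) t := by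
    apply HasDerivAt.fun_sum
    intro j _
    exact (hp_hasDeriv hq hr j t).mul (wp_hasDeriv j t)
  exact h1.sub (wp_hasDeriv k t)



theorem cheb_weighted {ι : Type*} (s : Finset ι) (p f g : ι → ℝ)
    (hp : ∀ i ∈ s, 0 ≤ p i)
    (hmono : ∀ i ∈ s, ∀ j ∈ s, 0 ≤ (f i - f j) * (g i - g j)) :
    (∑ i ∈ s, p i * f i) * (∑ i ∈ s, p i * g i) ≤
      (∑ i ∈ s, p i) * ∑ i ∈ s, p i * (f i * g i) := by
  have key : 0 ≤ ∑ i ∈ s, ∑ j ∈ s, p i * p j * ((f i - f j) * (g i - g j)) :=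
    Finset.sum_nonneg fun i hi => Finset.sum_nonneg fun j hj =>
      mul_nonneg (mul_nonneg (hp i hi) (hp j hj)) (hmono i hi j hj)
  have h1 : ∑ i ∈ s, ∑ j ∈ s, (p i * (f i * g i)) * p j
      = (∑ i ∈ s, p i * (f i * g i)) * (∑ j ∈ s, p j) := by
    rw [← Finset.sum_mul_sum]
  have h2 : ∑ i ∈ s, ∑ j ∈ s, p i * (p j * (f j * g j))
      = (∑ i ∈ s, p i) * (∑ j ∈ s, p j * (f j * g j)) := by
    rw [← Finset.sum_mul_sum]
  have h3 : ∑ i ∈ s, ∑ j ∈ s, (p i * f i) * (p j * g j)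
      = (∑ i ∈ s, p i * f i) * (∑ j ∈ s, p j * g j) := by
    rw [← Finset.sum_mul_sum]
  have h4 : ∑ i ∈ s, ∑ j ∈ s, (p i * g i) * (p j * f j)
      = (∑ i ∈ s, p i * g i) * (∑ j ∈ s, p j * f j) := by
    rw [← Finset.sum_mul_sum]
  have expand : ∑ i ∈ s, ∑ j ∈ s, p i * p j * ((f i - f j) * (g i - g j))
      = (∑ i ∈ s, ∑ j ∈ s, (p i * (f i * g i)) * p j)
        + (∑ i ∈ s, ∑ j ∈ s, p i * (p j * (f j * g j)))
        - (∑ i ∈ s, ∑ j ∈ s, (p i * f i) * (p j * g j))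
        - (∑ i ∈ s, ∑ j ∈ s, (p i * g i) * (p j * f j)) := by
    simp only [← Finset.sum_add_distrib, ← Finset.sum_sub_distrib]
    refine Finset.sum_congr rfl fun i _ => Finset.sum_congr rfl fun j _ => by ring
  rw [expand, h1, h2, h3, h4] at key
  nlinarith [key]

lemma mul_nonneg_of_nonpos_nonpos' {a b : ℝ} (ha : a ≤ 0) (hb : b ≤ 0) : 0 ≤ a * b := by
  nlinarith

variable {q r : ℕ} {β : ℝ} {z : Fin q → ℝ}

lemma qpos (hq : 2 ≤ q) : (0:ℝ) < (q:ℝ) := by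
  have : (0:ℕ) < q := by omega
  exact_mod_cast this

lemma sum_aa (hq : 2 ≤ q) (hz : z ∈ simplexP q) : ∑ j, aa q z j = 0 := by
  simp only [aa, Finset.sum_sub_distrib, hz.2, Finset.sum_const, Finset.card_univ,
    Fintype.card_fin, nsmul_eq_mul]
  have : (q:ℝ) ≠ 0 := (qpos hq).ne'
  field_simp
  simp

lemma Xp_nonneg (hq : 2 ≤ q) (hz : z ∈ simplexP q) (j : Fin q) {t : ℝ}
    (ht : t ∈ Set.Icc (0:ℝ) 1) : 0 ≤ Xp q z j t := by
  have h : Xp q z j t = (1 - t) * (1/(q:ℝ)) + t * z j := by rw [Xp, aa]; ring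
  rw [h]
  have h1 : 0 ≤ (1 - t) * (1/(q:ℝ)) :=
    mul_nonneg (by linarith [ht.2]) (by positivity)
  have h2 : 0 ≤ t * z j := mul_nonneg ht.1 (hz.1 j)
  linarith

lemma Xp_sum (hq : 2 ≤ q) (hz : z ∈ simplexP q) (t : ℝ) : ∑ j, Xp q z j t = 1 := by
  simp only [Xp, Finset.sum_add_distrib, ← Finset.mul_sum, sum_aa hq hz, Finset.sum_const,
    Finset.card_univ, Fintype.card_fin, nsmul_eq_mul, mul_zero, add_zero]
  have : (q:ℝ) ≠ 0 := (qpos hq).ne'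
  field_simp

lemma Xp_le_one (hq : 2 ≤ q) (hz : z ∈ simplexP q) (j : Fin q) {t : ℝ}
    (ht : t ∈ Set.Icc (0:ℝ) 1) : Xp q z j t ≤ 1 := by
  have h := Finset.single_le_sum (f := fun j => Xp q z j t)
    (fun i _ => Xp_nonneg hq hz i ht) (Finset.mem_univ j)
  rwa [Xp_sum hq hz t] at h

lemma hp_at_zero (hq : 2 ≤ q) (k : Fin q) : hp q r β z k 0 = 1/(q:ℝ) := by
  have hx : ∀ j : Fin q, Xp q z j 0 = 1/(q:ℝ) := fun j => by simp [Xp]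
  have hN : ∀ j : Fin q, Np q r β z j 0 = Real.exp (β * (1/(q:ℝ))^(r-1)) := fun j => by
    rw [Np, hx]
  rw [hp, Zp, hN]
  have : ∑ j : Fin q, Np q r β z j 0 = (q:ℝ) * Real.exp (β * (1/(q:ℝ))^(r-1)) := by
    rw [Finset.sum_congr rfl fun j _ => hN j]
    simp [Finset.card_univ]
  rw [this]
  have he : Real.exp (β * (1/(q:ℝ))^(r-1)) ≠ 0 := (Real.exp_pos _).ne'
  have hq0 : (q:ℝ) ≠ 0 := (qpos hq).ne'
  field_simp

lemma hp_monovary (hq : 2 ≤ q) (hz : z ∈ simplexP q) (hβ : 0 < β) {t : ℝ}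
    (ht : t ∈ Set.Icc (0:ℝ) 1) (i j : Fin q) :
    0 ≤ (hp q r β z i t - hp q r β z j t) * (Xp q z i t - Xp q z j t) := by
  have key : ∀ a b : Fin q, Xp q z a t ≤ Xp q z b t → hp q r β z a t ≤ hp q r β z b t := by
    intro a b hab
    rw [hp, hp]
    refine (div_le_div_iff_of_pos_right (Zp_pos hq t)).2 ?_
    rw [Np, Np]
    apply Real.exp_le_exp.2
    exact mul_le_mul_of_nonneg_left (pow_le_pow_left₀ (Xp_nonneg hq hz a ht) hab _) hβ.le
  rcases le_total (Xp q z i t) (Xp q z j t) with h | h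
  · have := key i j h
    exact mul_nonneg_of_nonpos_nonpos' (by linarith) (by linarith)
  · have := key j i h
    exact mul_nonneg (by linarith) (by linarith)





section tangency

lemma mul_cast_pow_pred (m' : ℕ) (y : ℝ) : y * ((m':ℝ) * y^(m'-1)) = (m':ℝ) * y^m' := by
  cases m' with
  | zero => simp
  | succ k =>
      have h : k + 1 - 1 = k := rfl
      rw [h, pow_succ]
      ring

noncomputable def Tfun (m' : ℕ) (c A B y : ℝ) : ℝ :=
  A * (y^m'*(y-c)^2) - B * (y^(m'+1)*(y-c))

noncomputable def Tfun' (m' : ℕ) (c A B y : ℝ) : ℝ :=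
  A * ((m':ℝ)*y^(m'-1)*(y-c)^2 + y^m'*(2*(y-c))) - B * (((m':ℝ)+1)*y^m'*(y-c) + y^(m'+1))

lemma Tfun_hasDeriv (m' : ℕ) (c A B y : ℝ) :
    HasDerivAt (Tfun m' c A B) (Tfun' m' c A B y) y := by
  have h1 : HasDerivAt (fun y : ℝ => y^m') ((m':ℝ)*y^(m'-1)) y := hasDerivAt_pow m' y
  have h2 : HasDerivAt (fun y : ℝ => (y-c)^2) (2*(y-c)) y := by
    have := ((hasDerivAt_id y).sub_const c).pow 2
    norm_num at this
    exact this
  have h3 : HasDerivAt (fun y : ℝ => y^(m'+1)) (((m':ℝ)+1)*y^m') y := by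
    have := hasDerivAt_pow (m'+1) y
    norm_num at this
    simpa using this
  have h4 : HasDerivAt (fun y : ℝ => y - c) 1 y := (hasDerivAt_id y).sub_const c
  have hmul1 : HasDerivAt (fun y : ℝ => y^m'*(y-c)^2)
      ((m':ℝ)*y^(m'-1)*(y-c)^2 + y^m'*(2*(y-c))) y := h1.mul h2
  have hmul2 : HasDerivAt (fun y : ℝ => y^(m'+1)*(y-c))
      (((m':ℝ)+1)*y^m'*(y-c) + y^(m'+1)) y := by
    have := h3.mul h4
    rw [mul_one] at this
    exact this
  exact (hmul1.const_mul A).sub (hmul2.const_mul B)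

lemma Tprime_factor (m' : ℕ) (c x y : ℝ) :
    y * Tfun' m' c (x^(m'+1)*(((m':ℝ)+2)*x-((m':ℝ)+1)*c)) (x^m'*(x-c)*(((m':ℝ)+2)*x-(m':ℝ)*c)) y
    = x^m' * y^m' * c * (y - x) *
        (((m':ℝ)+1)*((m':ℝ)+2)*x*y - (m':ℝ)*((m':ℝ)+2)*c*(x+y) + (m':ℝ)*((m':ℝ)+1)*c^2) := by
  rw [Tfun']
  linear_combination (x^(m'+1)*(((m':ℝ)+2)*x-((m':ℝ)+1)*c)*(y-c)^2) * (mul_cast_pow_pred m' y)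

lemma Q_pos (m' : ℕ) {c x y : ℝ} (hc : 0 < c) (hx : c ≤ x) (hy : c ≤ y) :
    0 < ((m':ℝ)+1)*((m':ℝ)+2)*x*y - (m':ℝ)*((m':ℝ)+2)*c*(x+y) + (m':ℝ)*((m':ℝ)+1)*c^2 := by
  have hm : (0:ℝ) ≤ (m':ℝ) := Nat.cast_nonneg m'
  nlinarith [mul_nonneg (mul_nonneg (add_nonneg hm (by norm_num : (0:ℝ) ≤ 2)) (sub_nonneg.2 hx))
      (sub_nonneg.2 hy), mul_pos hc hc, mul_nonneg hm (sub_nonneg.2 hx), mul_nonneg hm (sub_nonneg.2 hy),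
      mul_nonneg (mul_nonneg hm hm) (mul_nonneg (sub_nonneg.2 hx) (sub_nonneg.2 hy))]

lemma tangent_A_pos (m' : ℕ) {c x : ℝ} (hc : 0 < c) (hx : c < x) :
    0 < x^(m'+1)*(((m':ℝ)+2)*x-((m':ℝ)+1)*c) := by
  have hx0 : 0 < x := hc.trans hx
  have hm : (0:ℝ) ≤ (m':ℝ) := Nat.cast_nonneg m'
  apply mul_pos (pow_pos hx0 _)
  nlinarith

theorem tangent_ineq (m' : ℕ) {c x : ℝ} (hc : 0 < c) (hx : c < x) :
    ∀ y : ℝ, 0 ≤ y →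
      (x^(m'+1)*(((m':ℝ)+2)*x-((m':ℝ)+1)*c)) * (x^m'*(x-c)^2)
        - (x^m'*(x-c)*(((m':ℝ)+2)*x-(m':ℝ)*c)) * (x^(m'+1)*(x-c))
      ≤ (x^(m'+1)*(((m':ℝ)+2)*x-((m':ℝ)+1)*c)) * (y^m'*(y-c)^2)
        - (x^m'*(x-c)*(((m':ℝ)+2)*x-(m':ℝ)*c)) * (y^(m'+1)*(y-c)) := by
  have hx0 : 0 < x := hc.trans hx
  have hxc : 0 < x - c := sub_pos.2 hx
  have hm : (0:ℝ) ≤ (m':ℝ) := Nat.cast_nonneg m'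
  have hApos : 0 < x^(m'+1)*(((m':ℝ)+2)*x-((m':ℝ)+1)*c) := tangent_A_pos m' hc hx
  have hBpos : 0 < x^m'*(x-c)*(((m':ℝ)+2)*x-(m':ℝ)*c) := by
    apply mul_pos (mul_pos (pow_pos hx0 _) hxc)
    nlinarith
  set A : ℝ := x^(m'+1)*(((m':ℝ)+2)*x-((m':ℝ)+1)*c)
  set B : ℝ := x^m'*(x-c)*(((m':ℝ)+2)*x-(m':ℝ)*c)
  have hTd : ∀ y : ℝ, HasDerivAt (Tfun m' c A B) (Tfun' m' c A B y) y := Tfun_hasDeriv m' c A B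
  have hTcont : Continuous (Tfun m' c A B) :=
    continuous_iff_continuousAt.2 fun y => (hTd y).continuousAt
  have hTderiv : ∀ y : ℝ, deriv (Tfun m' c A B) y = Tfun' m' c A B y := fun y => (hTd y).deriv
  have hT'sign : ∀ v : ℝ, 0 < v → c ≤ v →
      (v ≤ x → Tfun' m' c A B v ≤ 0) ∧ (x ≤ v → 0 ≤ Tfun' m' c A B v) := by
    intro v hv0 hcv
    have hfac := Tprime_factor m' c x v
    have hQ := Q_pos m' hc hx.le hcv
    have h1 : 0 ≤ x^m' * v^m' * c :=
      mul_nonneg (mul_nonneg (pow_nonneg hx0.le _) (pow_nonneg hv0.le _)) hc.le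
    constructor
    · intro hvx
      have h2 : v - x ≤ 0 := sub_nonpos.2 hvx
      have e1 : x^m' * v^m' * c * (v-x) ≤ 0 := mul_nonpos_of_nonneg_of_nonpos h1 h2
      have e2 : v * Tfun' m' c A B v ≤ 0 := by
        rw [hfac]
        exact mul_nonpos_of_nonpos_of_nonneg e1 hQ.le
      have e2' : v * Tfun' m' c A B v ≤ v * 0 := by rw [mul_zero]; exact e2
      exact le_of_mul_le_mul_left e2' hv0
    · intro hxv
      have h2 : 0 ≤ v - x := sub_nonneg.2 hxv
      have e1 : 0 ≤ x^m' * v^m' * c * (v-x) := mul_nonneg h1 h2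
      have e2 : 0 ≤ v * Tfun' m' c A B v := by
        rw [hfac]
        exact mul_nonneg e1 hQ.le
      have e2' : v * 0 ≤ v * Tfun' m' c A B v := by rw [mul_zero]; exact e2
      exact le_of_mul_le_mul_left e2' hv0
  have hTx : Tfun m' c A B x = -(c * x^(2*m'+1) * (x-c)^2) := by
    rw [Tfun]; ring
  have hTxle : Tfun m' c A B x ≤ 0 := by
    rw [hTx]
    have : 0 ≤ c * x^(2*m'+1) * (x-c)^2 :=
      mul_nonneg (mul_nonneg hc.le (pow_pos hx0 _).le) (sq_nonneg _)
    linarith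
  intro y hy
  show Tfun m' c A B x ≤ Tfun m' c A B y
  rcases le_or_gt y c with hyc | hyc
  · have h1 : 0 ≤ A * (y^m'*(y-c)^2) :=
      mul_nonneg hApos.le (mul_nonneg (pow_nonneg hy _) (sq_nonneg _))
    have h2 : B * (y^(m'+1)*(y-c)) ≤ 0 :=
      mul_nonpos_of_nonneg_of_nonpos hBpos.le
        (mul_nonpos_of_nonneg_of_nonpos (pow_nonneg hy _) (sub_nonpos.2 hyc))
    have hTy : 0 ≤ Tfun m' c A B y := by rw [Tfun]; linarith
    linarith
  · rcases le_or_gt y x with hyx | hyx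
    · have hanti : AntitoneOn (Tfun m' c A B) (Set.Icc c x) := by
        apply antitoneOn_of_deriv_nonpos (convex_Icc c x) hTcont.continuousOn
        · intro v _
          exact (hTd v).differentiableAt.differentiableWithinAt
        · intro v hv
          rw [interior_Icc] at hv
          rw [hTderiv]
          exact (hT'sign v (hc.trans hv.1) hv.1.le).1 hv.2.le
      exact hanti ⟨hyc.le, hyx⟩ ⟨hx.le, le_refl x⟩ hyx
    · have hmono : MonotoneOn (Tfun m' c A B) (Set.Icc x y) := by
        apply monotoneOn_of_deriv_nonneg (convex_Icc x y) hTcont.continuousOn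
        · intro v _
          exact (hTd v).differentiableAt.differentiableWithinAt
        · intro v hv
          rw [interior_Icc] at hv
          rw [hTderiv]
          exact (hT'sign v (hx0.trans hv.1) (hx.le.trans hv.1.le)).2 hv.1.le
      exact hmono ⟨le_refl x, hyx.le⟩ ⟨hyx.le, le_refl y⟩ hyx.le

end tangency

variable {q r : ℕ} {β : ℝ} {z : Fin q → ℝ}

lemma Ex_ge (hq : 2 ≤ q) (hz : z ∈ simplexP q) (hβ : 0 < β) {t : ℝ}
    (ht : t ∈ Set.Icc (0:ℝ) 1) :
    1/(q:ℝ) ≤ ∑ j, hp q r β z j t * Xp q z j t := by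
  have hch := cheb_weighted Finset.univ (fun _ => (1:ℝ)) (fun j => hp q r β z j t)
    (fun j => Xp q z j t) (fun i _ => zero_le_one)
    (fun i _ j _ => hp_monovary hq hz hβ ht i j)
  simp only [one_mul] at hch
  rw [hp_sum hq, Xp_sum hq hz, Finset.sum_const, Finset.card_univ, Fintype.card_fin,
    nsmul_eq_mul] at hch
  rw [div_le_iff₀ (qpos hq)]
  nlinarith [hch]
lemma Ephi_nonneg (hq : 2 ≤ q) (hz : z ∈ simplexP q) (hβ : 0 < β) {t : ℝ}
    (ht : t ∈ Set.Icc (0:ℝ) 1) :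
    0 ≤ ∑ j, hp q r β z j t * ((Xp q z j t)^(r-2) * (Xp q z j t - 1/(q:ℝ))) := by
  have hch := cheb_weighted Finset.univ (fun j => hp q r β z j t)
    (fun j => (Xp q z j t)^(r-2)) (fun j => Xp q z j t - 1/(q:ℝ))
    (fun i _ => (hp_pos hq i t).le)
    (fun i _ j _ => by
      rcases le_total (Xp q z i t) (Xp q z j t) with h | h
      · apply mul_nonneg_of_nonpos_nonpos'
        · simp only [sub_nonpos]
          exact pow_le_pow_left₀ (Xp_nonneg hq hz i ht) h _
        · linarith
      · apply mul_nonneg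
        · simp only [sub_nonneg]
          exact pow_le_pow_left₀ (Xp_nonneg hq hz j ht) h _
        · linarith)
  rw [hp_sum hq, one_mul] at hch
  have hg : 0 ≤ ∑ j, hp q r β z j t * (Xp q z j t - 1/(q:ℝ)) := by
    have : ∑ j, hp q r β z j t * (Xp q z j t - 1/(q:ℝ))
        = (∑ j, hp q r β z j t * Xp q z j t) - 1/(q:ℝ) := by
      simp only [mul_sub, Finset.sum_sub_distrib, ← Finset.sum_mul, hp_sum hq, one_mul]
    rw [this, sub_nonneg]
    exact Ex_ge hq hz hβ ht
  have hf : 0 ≤ ∑ j, hp q r β z j t * (Xp q z j t)^(r-2) :=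
    Finset.sum_nonneg fun j _ =>
      mul_nonneg (hp_pos hq j t).le (pow_nonneg (Xp_nonneg hq hz j ht) _)
  calc (0:ℝ) ≤ (∑ j, hp q r β z j t * (Xp q z j t)^(r-2))
      * (∑ j, hp q r β z j t * (Xp q z j t - 1/(q:ℝ))) := mul_nonneg hf hg
  _ ≤ _ := hch

lemma t_mul_wp (j : Fin q) (t : ℝ) :
    t * wp q r z j t = (Xp q z j t)^(r-2) * (Xp q z j t - 1/(q:ℝ)) := by
  have h : Xp q z j t - 1/(q:ℝ) = t * aa q z j := by rw [Xp]; ring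
  rw [wp, h]; ring

lemma wb_nonneg (hq : 2 ≤ q) (hz : z ∈ simplexP q) (hβ : 0 < β) {t : ℝ}
    (ht : t ∈ Set.Icc (0:ℝ) 1) : 0 ≤ wb q r β z t := by
  rcases eq_or_lt_of_le ht.1 with h0 | h0
  · -- t = 0
    have : wb q r β z 0 = 0 := by
      have he : ∀ j : Fin q, hp q r β z j 0 * wp q r z j 0
          = (1/(q:ℝ)) * ((1/(q:ℝ))^(r-2) * aa q z j) := by
        intro j
        rw [hp_at_zero hq, wp]
        have : Xp q z j 0 = 1/(q:ℝ) := by simp [Xp]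
        rw [this]
      rw [wb, Finset.sum_congr rfl fun j _ => he j]
      rw [← Finset.mul_sum, ← Finset.mul_sum, sum_aa hq hz]
      ring
    rw [← h0, this]
  · -- t > 0
    have key : t * wb q r β z t
        = ∑ j, hp q r β z j t * ((Xp q z j t)^(r-2) * (Xp q z j t - 1/(q:ℝ))) := by
      rw [wb, Finset.mul_sum]
      exact Finset.sum_congr rfl fun j _ => by rw [← t_mul_wp]; ring
    have h1 := Ephi_nonneg hq hz hβ (r := r) ht
    rw [← key] at h1
    have : wb q r β z t = (t * wb q r β z t) / t := by field_simp
    rw [this]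
    exact div_nonneg h1 h0.le

lemma wpk_nonpos (hq : 2 ≤ q) (hz : z ∈ simplexP q) {k : Fin q} (hk : aa q z k ≤ 0)
    {t : ℝ} (ht : t ∈ Set.Icc (0:ℝ) 1) : wp q r z k t ≤ 0 :=
  mul_nonpos_of_nonneg_of_nonpos (pow_nonneg (Xp_nonneg hq hz k ht) _) hk

lemma Hdp_nonpos (hq : 2 ≤ q) (hz : z ∈ simplexP q) (hβ : 0 < β) {k : Fin q}
    (hk : aa q z k ≤ 0) {t : ℝ} (ht : t ∈ Set.Icc (0:ℝ) 1) : Hdp q r β z k t ≤ 0 := by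
  rw [Hdp]
  apply mul_nonpos_of_nonneg_of_nonpos
  · apply mul_nonneg (mul_nonneg hβ.le (Nat.cast_nonneg _)) (hp_pos hq k t).le
  · have h1 := wpk_nonpos hq hz hk (r := r) ht
    have h2 := wb_nonneg hq hz hβ (r := r) ht
    linarith



variable {q r : ℕ} {β : ℝ} {z : Fin q → ℝ}

lemma sum_hp_dev (hq : 2 ≤ q) (t : ℝ) :
    ∑ j, hp q r β z j t * (wp q r z j t - wb q r β z t) = 0 := by
  simp only [mul_sub]
  rw [Finset.sum_sub_distrib, ← Finset.sum_mul, hp_sum hq, one_mul, ← wb, sub_self]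

lemma sum_Hdw (hq : 2 ≤ q) (t : ℝ) :
    ∑ j, Hdp q r β z j t * wp q r z j t
      = β * ((r-1:ℕ):ℝ) * ∑ j, hp q r β z j t * (wp q r z j t - wb q r β z t)^2 := by
  have expand : ∀ j : Fin q, Hdp q r β z j t * wp q r z j t
      = β * ((r-1:ℕ):ℝ) * (hp q r β z j t * (wp q r z j t - wb q r β z t)^2)
        + (β * ((r-1:ℕ):ℝ) * wb q r β z t) * (hp q r β z j t * (wp q r z j t - wb q r β z t)) := by
    intro j; rw [Hdp]; ring
  rw [Finset.sum_congr rfl fun j _ => expand j, Finset.sum_add_distrib, ← Finset.mul_sum,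
    ← Finset.mul_sum, sum_hp_dev hq, mul_zero, add_zero]

lemma crossing_pos (hq : 2 ≤ q) (hr : 2 ≤ r) (hz : z ∈ simplexP q) (hβ : 0 < β)
    {k : Fin q} (hk : 0 < aa q z k) {j₀ : Fin q} (hj₀ : aa q z j₀ < 0)
    {t : ℝ} (ht : 0 < t) (ht1 : t ≤ 1) (hD : Dk q r β z k t = 0) :
    0 < Dk' q r β z k t := by
  have htI : t ∈ Set.Icc (0:ℝ) 1 := ⟨ht.le, ht1⟩
  have hcpos : (0:ℝ) < 1/(q:ℝ) := by positivity
  have hx : 1/(q:ℝ) < Xp q z k t := by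
    rw [Xp]
    nlinarith
  have hx0 : 0 < Xp q z k t := hcpos.trans hx
  have hcross : wb q r β z t = wp q r z k t := by
    have : wb q r β z t - wp q r z k t = 0 := hD
    linarith
  have hwk_pos : 0 < wp q r z k t := mul_pos (pow_pos hx0 _) hk
  -- variance part
  have hS1 : 0 < ∑ j, hp q r β z j t * (wp q r z j t - wb q r β z t)^2 := by
    have hterm : 0 < hp q r β z j₀ t * (wp q r z j₀ t - wb q r β z t)^2 := by
      apply mul_pos (hp_pos hq j₀ t)
      have hlt : wp q r z j₀ t - wb q r β z t < 0 := by
        have hwj : wp q r z j₀ t ≤ 0 := wpk_nonpos hq hz hj₀.le htI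
        rw [hcross]; linarith
      rw [pow_two]
      exact mul_pos_of_neg_of_neg hlt hlt
    calc (0:ℝ) < hp q r β z j₀ t * (wp q r z j₀ t - wb q r β z t)^2 := hterm
    _ ≤ _ := Finset.single_le_sum
        (f := fun j => hp q r β z j t * (wp q r z j t - wb q r β z t)^2)
        (fun j _ => mul_nonneg (hp_pos hq j t).le (sq_nonneg _)) (Finset.mem_univ j₀)
  -- second part
  have hS2 : wp' q r z k t ≤ ∑ j, hp q r β z j t * wp' q r z j t := by
    rcases Nat.lt_or_ge r 3 with hr2 | hr3
    · -- r = 2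
      have hr2' : r = 2 := by omega
      have : ∀ j : Fin q, wp' q r z j t = 0 := by
        intro j
        rw [wp', hr2']
        norm_num
      rw [this k]
      rw [Finset.sum_congr rfl fun j _ => by rw [this j, mul_zero]]
      simp
    · -- r ≥ 3
      set c : ℝ := 1/(q:ℝ)
      set x : ℝ := Xp q z k t with hxdef
      have e1 : r - 3 + 1 = r - 2 := by omega
      have e2 : ((r-3:ℕ):ℝ) + 2 = ((r-1:ℕ):ℝ) := by
        have : r - 3 + 2 = r - 1 := by omega
        push_cast [← this]
        ring
      have e3 : ((r-3:ℕ):ℝ) + 1 = ((r-2:ℕ):ℝ) := by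
        have : r - 3 + 1 = r - 2 := by omega
        push_cast [← this]
        ring
      have hti := tangent_ineq (r-3) (c := c) (x := x) hcpos hx
      rw [e1, e2, e3] at hti
      -- abbreviations
      set A : ℝ := x^(r-2)*(((r-1:ℕ):ℝ)*x-((r-2:ℕ):ℝ)*c) with hAdef
      set B : ℝ := x^(r-3)*(x-c)*(((r-1:ℕ):ℝ)*x-((r-3:ℕ):ℝ)*c) with hBdef
      have hApos : 0 < A := by
        have := tangent_A_pos (r-3) (c := c) (x := x) hcpos hx
        rw [e1, e2, e3] at this
        exact this
      -- summed tangent inequality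
      have hsumineq : A * (x^(r-3)*(x-c)^2) - B * (x^(r-2)*(x-c))
          ≤ A * (∑ j, hp q r β z j t * ((Xp q z j t)^(r-3)*(Xp q z j t-c)^2))
            - B * (∑ j, hp q r β z j t * ((Xp q z j t)^(r-2)*(Xp q z j t-c))) := by
        have hj : ∀ j : Fin q,
            hp q r β z j t * (A * (x^(r-3)*(x-c)^2) - B * (x^(r-2)*(x-c)))
            ≤ hp q r β z j t * (A * ((Xp q z j t)^(r-3)*(Xp q z j t-c)^2)
              - B * ((Xp q z j t)^(r-2)*(Xp q z j t-c))) := by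
          intro j
          apply mul_le_mul_of_nonneg_left _ (hp_pos hq j t).le
          exact hti (Xp q z j t) (Xp_nonneg hq hz j htI)
        have hsum := Finset.sum_le_sum (s := Finset.univ) (fun j _ => hj j)
        rw [← Finset.sum_mul, hp_sum hq, one_mul] at hsum
        calc A * (x^(r-3)*(x-c)^2) - B * (x^(r-2)*(x-c))
            ≤ ∑ j, hp q r β z j t * (A * ((Xp q z j t)^(r-3)*(Xp q z j t-c)^2)
              - B * ((Xp q z j t)^(r-2)*(Xp q z j t-c))) := hsum
        _ = A * (∑ j, hp q r β z j t * ((Xp q z j t)^(r-3)*(Xp q z j t-c)^2))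
            - B * (∑ j, hp q r β z j t * ((Xp q z j t)^(r-2)*(Xp q z j t-c))) := by
          rw [Finset.mul_sum, Finset.mul_sum, ← Finset.sum_sub_distrib]
          exact Finset.sum_congr rfl fun j _ => by ring
      -- the phi-sum equals phi(x) by the crossing identity
      have hphisum : ∑ j, hp q r β z j t * ((Xp q z j t)^(r-2)*(Xp q z j t-c))
          = x^(r-2)*(x-c) := by
        have h1 : ∀ j : Fin q, (Xp q z j t)^(r-2)*(Xp q z j t-c) = t * wp q r z j t :=
          fun j => (t_mul_wp j t).symm
        rw [Finset.sum_congr rfl fun j _ => by rw [h1 j]]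
        have : ∑ j, hp q r β z j t * (t * wp q r z j t) = t * wb q r β z t := by
          rw [wb, Finset.mul_sum]
          exact Finset.sum_congr rfl fun j _ => by ring
        rw [this, hcross, ← t_mul_wp]
      rw [hphisum] at hsumineq
      -- deduce rho-sum >= rho(x)
      have hrho : x^(r-3)*(x-c)^2
          ≤ ∑ j, hp q r β z j t * ((Xp q z j t)^(r-3)*(Xp q z j t-c)^2) := by
        have : A * (x^(r-3)*(x-c)^2)
            ≤ A * (∑ j, hp q r β z j t * ((Xp q z j t)^(r-3)*(Xp q z j t-c)^2)) := by
          linarith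
        exact le_of_mul_le_mul_left this hApos
      -- convert to wp'
      have hrho' : ∀ j : Fin q, (Xp q z j t)^(r-3)*(Xp q z j t-c)^2
          = t^2 * ((Xp q z j t)^(r-3) * (aa q z j)^2) := by
        intro j
        have h : Xp q z j t - c = t * aa q z j := by rw [Xp]; ring
        rw [h]; ring
      rw [hrho' k] at hrho
      rw [Finset.sum_congr rfl fun j _ => by rw [hrho' j]] at hrho
      have hxa : ∑ j, hp q r β z j t * (t^2 * ((Xp q z j t)^(r-3) * (aa q z j)^2))
          = t^2 * ∑ j, hp q r β z j t * ((Xp q z j t)^(r-3) * (aa q z j)^2) := by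
        rw [Finset.mul_sum]
        exact Finset.sum_congr rfl fun j _ => by ring
      rw [hxa] at hrho
      have ht2 : (0:ℝ) < t^2 := by positivity
      have hfin : (Xp q z k t)^(r-3) * (aa q z k)^2
          ≤ ∑ j, hp q r β z j t * ((Xp q z j t)^(r-3) * (aa q z j)^2) :=
        (mul_le_mul_iff_right₀ ht2).1 hrho
      -- multiply by (r-2) cast
      have hm : (0:ℝ) ≤ ((r-2:ℕ):ℝ) := Nat.cast_nonneg _
      have := mul_le_mul_of_nonneg_left hfin hm
      calc wp' q r z k t = ((r-2:ℕ):ℝ) * ((Xp q z k t)^(r-3) * (aa q z k)^2) := by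
            rw [wp']; ring
      _ ≤ ((r-2:ℕ):ℝ) * ∑ j, hp q r β z j t * ((Xp q z j t)^(r-3) * (aa q z j)^2) := this
      _ = ∑ j, hp q r β z j t * wp' q r z j t := by
            rw [Finset.mul_sum]
            exact Finset.sum_congr rfl fun j _ => by rw [wp']; ring
  -- assemble
  have hD'formula : Dk' q r β z k t
      = (∑ j, Hdp q r β z j t * wp q r z j t)
        + ((∑ j, hp q r β z j t * wp' q r z j t) - wp' q r z k t) := by
    rw [Dk', Finset.sum_add_distrib]
    ring
  rw [hD'formula, sum_Hdw hq]
  have hb : 0 < β * ((r-1:ℕ):ℝ) := by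
    apply mul_pos hβ
    have : 0 < r - 1 := by omega
    exact_mod_cast this
  have := mul_pos hb hS1
  linarith




theorem stay_nonneg (D D' : ℝ → ℝ) (hD : ∀ t, HasDerivAt D (D' t) t)
    (hcross : ∀ t, 0 < t → t ≤ 1 → D t = 0 → 0 < D' t)
    {s t : ℝ} (hs : 0 < s) (hst : s ≤ t) (ht : t ≤ 1) (hDs : 0 ≤ D s) : 0 ≤ D t := by
  by_contra hneg
  push_neg at hneg
  have hcont : Continuous D := by
    refine continuous_iff_continuousAt.2 fun x => (hD x).continuousAt
  set A : Set ℝ := {v | v ∈ Set.Icc s t ∧ 0 ≤ D v} with hA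
  have hAclosed : IsClosed A := by
    have : A = Set.Icc s t ∩ D ⁻¹' Set.Ici 0 := by
      ext v
      constructor
      · rintro ⟨h1, h2⟩; exact ⟨h1, h2⟩
      · rintro ⟨h1, h2⟩; exact ⟨h1, h2⟩
    rw [this]
    exact isClosed_Icc.inter (isClosed_Ici.preimage hcont)
  have hAne : A.Nonempty := ⟨s, ⟨le_refl s, hst⟩, hDs⟩
  have hAbdd : BddAbove A := ⟨t, fun v hv => hv.1.2⟩
  set u := sSup A with hu
  have huA : u ∈ A := hAclosed.csSup_mem hAne hAbdd
  have hut : u < t := lt_of_le_of_ne huA.1.2 (fun h => hneg.not_ge (h ▸ huA.2))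
  have hlt : ∀ v, u < v → v ≤ t → D v < 0 := by
    intro v huv hvt
    by_contra hge
    push_neg at hge
    exact absurd (le_csSup hAbdd ⟨⟨le_trans (le_trans huA.1.1 huv.le) le_rfl |>.trans le_rfl, hvt⟩, hge⟩) (not_le.2 huv)
  have hDu0 : D u = 0 := by
    have htend : Filter.Tendsto D (nhdsWithin u (Set.Ioi u)) (nhds (D u)) :=
      (hcont.continuousAt).continuousWithinAt
    have hev : ∀ᶠ v in nhdsWithin u (Set.Ioi u), D v ≤ 0 := by
      filter_upwards [Ioc_mem_nhdsGT_of_mem ⟨le_refl u, hut⟩] with v hv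
      exact (hlt v hv.1 hv.2).le
    have : D u ≤ 0 := le_of_tendsto htend hev
    exact le_antisymm this huA.2
  have hD'pos : 0 < D' u := hcross u (lt_of_lt_of_le hs huA.1.1) (huA.1.2.trans ht) hDu0
  have hslope : Filter.Tendsto (slope D u) (nhdsWithin u (Set.Ioi u)) (nhds (D' u)) := by
    have := hasDerivAt_iff_tendsto_slope.1 (hD u)
    exact this.mono_left (nhdsWithin_mono u (fun v hv => ne_of_gt hv))
  have hev2 : ∀ᶠ v in nhdsWithin u (Set.Ioi u), 0 < slope D u v :=
    hslope.eventually (eventually_gt_nhds hD'pos)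
  have hev3 : ∀ᶠ v in nhdsWithin u (Set.Ioi u), v ∈ Set.Ioc u t :=
    Ioc_mem_nhdsGT_of_mem ⟨le_refl u, hut⟩
  obtain ⟨v, hv1, hv2⟩ := (hev2.and hev3).exists
  rw [slope_def_field, hDu0, sub_zero] at hv1
  have hvpos : 0 < v - u := sub_pos.2 hv2.1
  have : 0 < D v := by
    have := mul_pos hv1 hvpos
    rwa [div_mul_cancel₀] at this
    exact ne_of_gt hvpos
  exact absurd this (not_lt.2 (hlt v hv2.1 hv2.2).le)

theorem single_crossing (D D' : ℝ → ℝ) (hD : ∀ t, HasDerivAt D (D' t) t)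
    (h0 : D 0 < 0)
    (hcross : ∀ t, 0 < t → t ≤ 1 → D t = 0 → 0 < D' t) :
    (∀ t ∈ Set.Icc (0:ℝ) 1, D t ≤ 0) ∨
      ∃ τ ∈ Set.Icc (0:ℝ) 1, (∀ t ∈ Set.Icc 0 τ, D t ≤ 0) ∧ (∀ t ∈ Set.Icc τ 1, 0 ≤ D t) := by
  have hcont : Continuous D :=
    continuous_iff_continuousAt.2 fun x => (hD x).continuousAt
  set S : Set ℝ := {v | v ∈ Set.Icc (0:ℝ) 1 ∧ 0 ≤ D v} with hS
  by_cases hSne : S.Nonempty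
  · right
    have hSclosed : IsClosed S := by
      have : S = Set.Icc (0:ℝ) 1 ∩ D ⁻¹' Set.Ici 0 := by
        ext v
        constructor
        · rintro ⟨h1, h2⟩; exact ⟨h1, h2⟩
        · rintro ⟨h1, h2⟩; exact ⟨h1, h2⟩
      rw [this]
      exact isClosed_Icc.inter (isClosed_Ici.preimage hcont)
    have hSbdd : BddBelow S := ⟨0, fun v hv => hv.1.1⟩
    set τ := sInf S with hτ
    have hτS : τ ∈ S := hSclosed.csInf_mem hSne hSbdd
    have hτmem : τ ∈ Set.Icc (0:ℝ) 1 := hτS.1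
    have hτpos : 0 < τ := by
      rcases lt_or_eq_of_le hτmem.1 with h | h
      · exact h
      · exact absurd (h ▸ hτS.2) (not_le.2 h0)
    have hbefore : ∀ t, 0 ≤ t → t < τ → D t < 0 := by
      intro t ht0 htτ
      by_contra hge
      push_neg at hge
      have : t ∈ S := ⟨⟨ht0, htτ.le.trans hτmem.2⟩, hge⟩
      exact absurd (csInf_le hSbdd this) (not_le.2 htτ)
    have hτle : D τ ≤ 0 := by
      have htend : Filter.Tendsto D (nhdsWithin τ (Set.Iio τ)) (nhds (D τ)) :=
        (hcont.continuousAt).continuousWithinAt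
      have hev : ∀ᶠ v in nhdsWithin τ (Set.Iio τ), D v ≤ 0 := by
        filter_upwards [Ico_mem_nhdsLT_of_mem ⟨hτpos, le_refl τ⟩] with v hv
        exact (hbefore v hv.1 hv.2).le
      exact le_of_tendsto htend hev
    refine ⟨τ, hτmem, ?_, ?_⟩
    · intro t htmem
      rcases lt_or_eq_of_le htmem.2 with h | h
      · exact (hbefore t htmem.1 h).le
      · rw [h]; exact hτle
    · intro t htmem
      rcases eq_or_lt_of_le htmem.1 with h | h
      · exact h ▸ hτS.2
      · exact stay_nonneg D D' hD hcross hτpos h.le htmem.2 hτS.2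
  · left
    intro t htmem
    by_contra hge
    push_neg at hge
    exact hSne ⟨t, htmem, hge.le⟩

variable {q r : ℕ} {β : ℝ} {z : Fin q → ℝ}

lemma wb_at_zero (hq : 2 ≤ q) (hz : z ∈ simplexP q) : wb q r β z 0 = 0 := by
  have he : ∀ j : Fin q, hp q r β z j 0 * wp q r z j 0
      = (1/(q:ℝ)) * ((1/(q:ℝ))^(r-2) * aa q z j) := by
    intro j
    rw [hp_at_zero hq, wp]
    have : Xp q z j 0 = 1/(q:ℝ) := by simp [Xp]
    rw [this]
  rw [wb, Finset.sum_congr rfl fun j _ => he j]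
  rw [← Finset.mul_sum, ← Finset.mul_sum, sum_aa hq hz]
  ring

lemma Hdp_neg_Dk (k : Fin q) (t : ℝ) :
    Hdp q r β z k t = β*((r-1:ℕ):ℝ)*hp q r β z k t * (-(Dk q r β z k t)) := by
  rw [Hdp, Dk]; ring

lemma Hdp_nonneg_of_Dk (hq : 2 ≤ q) (hβ : 0 < β) {k : Fin q} {t : ℝ}
    (h : Dk q r β z k t ≤ 0) : 0 ≤ Hdp q r β z k t := by
  rw [Hdp_neg_Dk]
  apply mul_nonneg
  · exact mul_nonneg (mul_nonneg hβ.le (Nat.cast_nonneg _)) (hp_pos hq k t).le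
  · linarith

lemma Hdp_nonpos_of_Dk (hq : 2 ≤ q) (hβ : 0 < β) {k : Fin q} {t : ℝ}
    (h : 0 ≤ Dk q r β z k t) : Hdp q r β z k t ≤ 0 := by
  rw [Hdp_neg_Dk]
  apply mul_nonpos_of_nonneg_of_nonpos
  · exact mul_nonneg (mul_nonneg hβ.le (Nat.cast_nonneg _)) (hp_pos hq k t).le
  · linarith

lemma ftc_Hdp (hq : 2 ≤ q) (hr : 2 ≤ r) (k : Fin q) (s u : ℝ) :
    ∫ t in s..u, Hdp q r β z k t = hp q r β z k u - hp q r β z k s :=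
  intervalIntegral.integral_eq_sub_of_hasDerivAt (fun x _ => hp_hasDeriv hq hr k x)
    ((Hdp_cont hq hr k).intervalIntegrable s u)

lemma int_neg_coord (hq : 2 ≤ q) (hr : 2 ≤ r) (hz : z ∈ simplexP q) (hβ : 0 < β)
    {k : Fin q} (hk : aa q z k ≤ 0) :
    ∫ t in (0:ℝ)..1, |Hdp q r β z k t| = hp q r β z k 0 - hp q r β z k 1 := by
  have hcongr : Set.EqOn (fun t => |Hdp q r β z k t|) (fun t => -(Hdp q r β z k t))
      (Set.uIcc (0:ℝ) 1) := by
    intro t htmem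
    rw [Set.uIcc_of_le (by norm_num : (0:ℝ) ≤ 1)] at htmem
    exact abs_of_nonpos (Hdp_nonpos hq hz hβ hk htmem)
  rw [intervalIntegral.integral_congr hcongr, intervalIntegral.integral_neg, ftc_Hdp hq hr]
  ring

lemma int_pos_coord (hq : 2 ≤ q) (hr : 2 ≤ r) (hz : z ∈ simplexP q) (hβ : 0 < β)
    {k : Fin q} (hk : 0 < aa q z k) {j₀ : Fin q} (hj₀ : aa q z j₀ < 0) :
    ∃ τ ∈ Set.Icc (0:ℝ) 1,
      ∫ t in (0:ℝ)..1, |Hdp q r β z k t|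
        = 2 * hp q r β z k τ - hp q r β z k 0 - hp q r β z k 1 := by
  have hD0 : Dk q r β z k 0 < 0 := by
    rw [Dk, wb_at_zero hq hz]
    have : 0 < wp q r z k 0 := by
      rw [wp]
      apply mul_pos _ hk
      apply pow_pos
      have : Xp q z k 0 = 1/(q:ℝ) := by simp [Xp]
      rw [this]; positivity
    linarith
  have hsc := single_crossing (Dk q r β z k) (Dk' q r β z k)
    (fun t => Dk_hasDeriv hq hr k t) hD0
    (fun t ht ht1 hD => crossing_pos hq hr hz hβ hk hj₀ ht ht1 hD)
  rcases hsc with hall | ⟨τ, hτmem, hle, hge⟩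
  · refine ⟨1, ⟨by norm_num, le_refl 1⟩, ?_⟩
    have hcongr : Set.EqOn (fun t => |Hdp q r β z k t|) (fun t => Hdp q r β z k t)
        (Set.uIcc (0:ℝ) 1) := by
      intro t htmem
      rw [Set.uIcc_of_le (by norm_num : (0:ℝ) ≤ 1)] at htmem
      exact abs_of_nonneg (Hdp_nonneg_of_Dk hq hβ (hall t htmem))
    rw [intervalIntegral.integral_congr hcongr, ftc_Hdp hq hr]
    ring
  · refine ⟨τ, hτmem, ?_⟩
    have hint : IntervalIntegrable (fun t => |Hdp q r β z k t|) MeasureTheory.volume 0 τ :=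
      ((Hdp_cont hq hr k).abs.intervalIntegrable 0 τ)
    have hint2 : IntervalIntegrable (fun t => |Hdp q r β z k t|) MeasureTheory.volume τ 1 :=
      ((Hdp_cont hq hr k).abs.intervalIntegrable τ 1)
    rw [← intervalIntegral.integral_add_adjacent_intervals hint hint2]
    have hcongr1 : Set.EqOn (fun t => |Hdp q r β z k t|) (fun t => Hdp q r β z k t)
        (Set.uIcc (0:ℝ) τ) := by
      intro t htmem
      rw [Set.uIcc_of_le hτmem.1] at htmem
      exact abs_of_nonneg (Hdp_nonneg_of_Dk hq hβ (hle t htmem))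
    have hcongr2 : Set.EqOn (fun t => |Hdp q r β z k t|) (fun t => -(Hdp q r β z k t))
        (Set.uIcc τ 1) := by
      intro t htmem
      rw [Set.uIcc_of_le hτmem.2] at htmem
      exact abs_of_nonpos (Hdp_nonpos_of_Dk hq hβ (hge t htmem))
    rw [intervalIntegral.integral_congr hcongr1, intervalIntegral.integral_congr hcongr2,
      intervalIntegral.integral_neg, ftc_Hdp hq hr, ftc_Hdp hq hr]
    ring



end GCWP

open GCWP

/-- **Aggregate `g`-variation along straight lines** (proof of Lemma 7.3 in the
survey).  If `g_k^r(z) < z_k` whenever `z_k ∈ (1/q,1]` (which holds for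
`β < β_s(q,r)`), then for every `z ∈ P`, `z ≠ z_β`, the straight-line path
`z(t) = (1−t)z_β + tz` satisfies
`Σ_k ∫₀¹ |d/dt g_k^r(z(t))| dt < ‖z − z_β‖₁`. -/
theorem gcwp_aggregate_variation (q r : ℕ) (hq : 2 ≤ q) (hr : 2 ≤ r)
    (β : ℝ) (hβ : 0 < β)
    (hcontr : ∀ z ∈ simplexP q, ∀ k : Fin q,
      z k ∈ Set.Ioc (1 / (q : ℝ)) 1 → gGCWP q r β z k < z k) :
    ∀ z ∈ simplexP q, z ≠ zUnif q →
      (∑ k : Fin q, ∫ t in (0 : ℝ)..1,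
          |deriv (fun s : ℝ => gGCWP q r β ((1 - s) • zUnif q + s • z) k) t|)
        < l1 q (z - zUnif q) := by
  intro z hz hzu
  have hpoint : ∀ s : ℝ, ((1 - s) • zUnif q + s • z) = fun j => Xp q z j s := by
    intro s; funext j
    simp only [Pi.add_apply, Pi.smul_apply, smul_eq_mul, zUnif, Xp, aa]
    ring
  have hfun : ∀ k : Fin q,
      (fun s : ℝ => gGCWP q r β ((1 - s) • zUnif q + s • z) k) = hp q r β z k := by
    intro k; funext s
    rw [hpoint s]
    rfl
  have hderiv : ∀ k : Fin q,
      deriv (fun s : ℝ => gGCWP q r β ((1 - s) • zUnif q + s • z) k) = Hdp q r β z k := by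
    intro k; rw [hfun k]; funext t; exact (hp_hasDeriv hq hr k t).deriv
  have hIeq : ∀ k : Fin q,
      (∫ t in (0:ℝ)..1, |deriv (fun s : ℝ => gGCWP q r β ((1 - s) • zUnif q + s • z) k) t|)
        = ∫ t in (0:ℝ)..1, |Hdp q r β z k t| := by
    intro k; rw [hderiv k]
  rw [Finset.sum_congr rfl fun k _ => hIeq k]
  -- basic structure of aa
  have hsuma : ∑ j, aa q z j = 0 := sum_aa hq hz
  have hnonzero : ∃ k, aa q z k ≠ 0 := by
    by_contra hc
    push_neg at hc
    apply hzu
    funext k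
    have := hc k
    rw [aa, sub_eq_zero] at this
    rw [this, zUnif]
  have hPex : ∃ k, 0 < aa q z k := by
    by_contra hc
    push_neg at hc
    have hall : ∀ k ∈ Finset.univ, aa q z k = 0 :=
      (Finset.sum_eq_zero_iff_of_nonpos (fun k _ => hc k)).1 hsuma
    obtain ⟨k, hk⟩ := hnonzero
    exact hk (hall k (Finset.mem_univ k))
  have hNex : ∃ j₀, aa q z j₀ < 0 := by
    by_contra hc
    push_neg at hc
    have hall : ∀ k ∈ Finset.univ, aa q z k = 0 :=
      (Finset.sum_eq_zero_iff_of_nonneg (fun k _ => hc k)).1 hsuma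
    obtain ⟨k, hk⟩ := hnonzero
    exact hk (hall k (Finset.mem_univ k))
  obtain ⟨j₀, hj₀⟩ := hNex
  -- choose peaks
  have hch : ∀ k : Fin q, ∃ τ, τ ∈ Set.Icc (0:ℝ) 1 ∧ (0 < aa q z k →
      (∫ t in (0:ℝ)..1, |Hdp q r β z k t|)
        = 2 * hp q r β z k τ - hp q r β z k 0 - hp q r β z k 1) := by
    intro k
    by_cases hk : 0 < aa q z k
    · obtain ⟨τ, hτmem, hτint⟩ := int_pos_coord hq hr hz hβ hk hj₀
      exact ⟨τ, hτmem, fun _ => hτint⟩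
    · exact ⟨0, ⟨le_refl 0, by norm_num⟩, fun h => absurd h hk⟩
  choose τf hτmem hτint using hch
  -- split the sum
  have hsplit := Finset.sum_filter_add_sum_filter_not Finset.univ
    (fun k => 0 < aa q z k) (fun k => ∫ t in (0:ℝ)..1, |Hdp q r β z k t|)
  set P : Finset (Fin q) := Finset.univ.filter (fun k => 0 < aa q z k) with hPdef
  set NP : Finset (Fin q) := Finset.univ.filter (fun k => ¬ 0 < aa q z k) with hNPdef
  have hPmem : ∀ k ∈ P, 0 < aa q z k := fun k hk => (Finset.mem_filter.1 hk).2
  have hNPmem : ∀ k ∈ NP, aa q z k ≤ 0 := fun k hk =>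
    le_of_not_gt (Finset.mem_filter.1 hk).2
  have hPne : P.Nonempty := by
    obtain ⟨k, hk⟩ := hPex
    exact ⟨k, Finset.mem_filter.2 ⟨Finset.mem_univ k, hk⟩⟩
  -- value of the sum
  have hval : ∑ k, (∫ t in (0:ℝ)..1, |Hdp q r β z k t|)
      = ∑ k ∈ P, 2 * (hp q r β z k (τf k) - 1/(q:ℝ)) := by
    rw [← hsplit]
    have h1 : ∑ k ∈ P, (∫ t in (0:ℝ)..1, |Hdp q r β z k t|)
        = ∑ k ∈ P, (2 * hp q r β z k (τf k) - hp q r β z k 0 - hp q r β z k 1) :=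
      Finset.sum_congr rfl fun k hk => hτint k (hPmem k hk)
    have h2 : ∑ k ∈ NP, (∫ t in (0:ℝ)..1, |Hdp q r β z k t|)
        = ∑ k ∈ NP, (hp q r β z k 0 - hp q r β z k 1) :=
      Finset.sum_congr rfl fun k hk => int_neg_coord hq hr hz hβ (hNPmem k hk)
    rw [h1, h2]
    have h3 : ∑ k ∈ P, (2 * hp q r β z k (τf k) - hp q r β z k 0 - hp q r β z k 1)
        = ∑ k ∈ P, 2 * (hp q r β z k (τf k) - hp q r β z k 0)
          + ∑ k ∈ P, (hp q r β z k 0 - hp q r β z k 1) := by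
      rw [← Finset.sum_add_distrib]
      exact Finset.sum_congr rfl fun k _ => by ring
    rw [h3, add_assoc]
    have h4 : ∑ k ∈ P, (hp q r β z k 0 - hp q r β z k 1)
        + ∑ k ∈ NP, (hp q r β z k 0 - hp q r β z k 1) = 0 := by
      rw [Finset.sum_filter_add_sum_filter_not]
      rw [Finset.sum_sub_distrib, hp_sum hq, hp_sum hq, sub_self]
    rw [h4, add_zero]
    exact Finset.sum_congr rfl fun k _ => by rw [hp_at_zero hq]
  rw [hval]
  -- value of the RHS
  have hrhs : l1 q (z - zUnif q) = ∑ k ∈ P, 2 * aa q z k := by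
    rw [l1]
    have habs : ∀ k : Fin q, |(z - zUnif q) k| = |aa q z k| := by
      intro k
      rw [Pi.sub_apply, zUnif, aa]
    rw [Finset.sum_congr rfl fun k _ => habs k]
    rw [← Finset.sum_filter_add_sum_filter_not Finset.univ (fun k => 0 < aa q z k)]
    have hPa : ∑ k ∈ P, |aa q z k| = ∑ k ∈ P, aa q z k :=
      Finset.sum_congr rfl fun k hk => abs_of_pos (hPmem k hk)
    have hNPa : ∑ k ∈ NP, |aa q z k| = - ∑ k ∈ NP, aa q z k := by
      rw [← Finset.sum_neg_distrib]
      exact Finset.sum_congr rfl fun k hk => abs_of_nonpos (hNPmem k hk)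
    have hzero : ∑ k ∈ P, aa q z k + ∑ k ∈ NP, aa q z k = 0 := by
      rw [Finset.sum_filter_add_sum_filter_not]
      exact hsuma
    rw [hPa, hNPa]
    have h2s : ∑ k ∈ P, 2 * aa q z k = 2 * ∑ k ∈ P, aa q z k := by
      rw [Finset.mul_sum]
    rw [h2s]
    linarith [hzero]
  rw [hrhs]
  -- strict termwise comparison
  apply Finset.sum_lt_sum_of_nonempty hPne
  intro k hk
  have hak := hPmem k hk
  have hkey : hp q r β z k (τf k) < 1/(q:ℝ) + aa q z k := by
    rcases eq_or_lt_of_le (hτmem k).1 with h0 | h0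
    · rw [← h0, hp_at_zero hq]
      linarith
    · have hy : (fun j => Xp q z j (τf k)) ∈ simplexP q :=
        ⟨fun j => Xp_nonneg hq hz j (hτmem k), Xp_sum hq hz _⟩
      have hco : (fun j => Xp q z j (τf k)) k ∈ Set.Ioc (1/(q:ℝ)) 1 := by
        constructor
        · show 1/(q:ℝ) < Xp q z k (τf k)
          rw [Xp]
          nlinarith
        · exact Xp_le_one hq hz k (hτmem k)
      have hlt := hcontr _ hy k hco
      have hlt' : hp q r β z k (τf k) < Xp q z k (τf k) := hlt
      have hXk : Xp q z k (τf k) ≤ 1/(q:ℝ) + aa q z k := by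
        rw [Xp]
        have hmm : τf k * aa q z k ≤ aa q z k :=
          mul_le_of_le_one_left hak.le (hτmem k).2
        linarith
      linarith
  linarith

end
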